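/- Let N be a positive integer and D_0 = y(1+y)d²/dy² + [1-(N-1)y]d/dy. The unique formal power series Q_0 with D_0 Q_0 = 1 and Q_0(0) = 0 is a polynomial of degree exactly N whose y^N coefficient equals 1/N². -/

import Mathlib

open PowerSeries

/-- The differential operator `D_m = y(1+y) d²/dy² + [1-(N-1)y] d/dy + m(N-m)`
acting on formal power series over `ℚ`. -/
noncomputable def Dop (N m : ℕ) (u : PowerSeries ℚ) : PowerSeries ℚ :=
  (PowerSeries.X * (1 + PowerSeries.X)) *
      (PowerSeries.derivative ℚ (PowerSeries.derivative ℚ u))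
    + (1 - PowerSeries.C ((N : ℚ) - 1) * PowerSeries.X) * (PowerSeries.derivative ℚ u)
    + PowerSeries.C ((m : ℚ) * ((N : ℚ) - (m : ℚ))) * u


noncomputable def aQ (N : ℕ) : ℕ → ℚ
  | 0 => 0
  | 1 => 1
  | (j+2) => ((j+1 : ℚ) * ((N:ℚ) - (j+1))) / ((j+2:ℚ))^2 * aQ N (j+1)

lemma coeff_zero_X_mul' (u : PowerSeries ℚ) : PowerSeries.coeff 0 (X * u) = 0 := by
  simp [PowerSeries.coeff_zero_eq_constantCoeff, map_mul]

lemma aQ_rec (N : ℕ) (j : ℕ) :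
    ((j:ℚ)+1)^2 * aQ N (j+1) = (j:ℚ)*((N:ℚ)-j) * aQ N j + (if j = 0 then 1 else 0) := by
  match j with
  | 0 => simp [aQ]
  | (k+1) =>
    have h : aQ N (k+1+1) = ((k+1 : ℚ) * ((N:ℚ) - (k+1))) / ((k+2:ℚ))^2 * aQ N (k+1) := by
      rw [show k+1+1 = k+2 from rfl, aQ]
    rw [h, if_neg (Nat.succ_ne_zero k)]
    have h2 : ((k:ℚ)+2)^2 ≠ 0 := by positivity
    push_cast
    field_simp
    ring

lemma coeff_Dop (N : ℕ) (Q : PowerSeries ℚ) (j : ℕ) :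
    PowerSeries.coeff j (Dop N 0 Q) =
      ((j:ℚ)+1)^2 * PowerSeries.coeff (j+1) Q + (j:ℚ)*((j:ℚ)-(N:ℚ)) * PowerSeries.coeff j Q := by
  have hD : Dop N 0 Q = X * (PowerSeries.derivative ℚ (PowerSeries.derivative ℚ Q))
      + X * (X * (PowerSeries.derivative ℚ (PowerSeries.derivative ℚ Q)))
      + PowerSeries.derivative ℚ Q
      - PowerSeries.C ((N:ℚ)-1) * (X * PowerSeries.derivative ℚ Q) := by
    unfold Dop
    simp only [Nat.cast_zero, zero_mul, map_zero]
    ring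
  rw [hD]
  match j with
  | 0 =>
    rw [map_sub, map_add, map_add, coeff_zero_X_mul', coeff_zero_X_mul',
      PowerSeries.coeff_C_mul, coeff_zero_X_mul', PowerSeries.coeff_zero_eq_constantCoeff,
      ← PowerSeries.coeff_zero_eq_constantCoeff, PowerSeries.coeff_derivative]
    push_cast; ring
  | (k+1) =>
    rw [map_sub, map_add, map_add, coeff_succ_X_mul, coeff_succ_X_mul,
      PowerSeries.coeff_C_mul, coeff_succ_X_mul, PowerSeries.coeff_derivative,
      PowerSeries.coeff_derivative, PowerSeries.coeff_derivative]
    match k with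
    | 0 =>
      rw [coeff_zero_X_mul']
      push_cast; ring
    | (l+1) =>
      rw [coeff_succ_X_mul, PowerSeries.coeff_derivative, PowerSeries.coeff_derivative]
      push_cast; ring

lemma key_rec (N : ℕ) (Q : PowerSeries ℚ) (h : Dop N 0 Q = 1) (j : ℕ) :
    ((j:ℚ)+1)^2 * PowerSeries.coeff (j+1) Q =
      (j:ℚ)*((N:ℚ)-j) * PowerSeries.coeff j Q + (if j = 0 then 1 else 0) := by
  have := coeff_Dop N Q j
  rw [h, PowerSeries.coeff_one] at this
  have h2 : ((j:ℚ)+1)^2 * PowerSeries.coeff (j+1) Q + (j:ℚ)*((j:ℚ)-(N:ℚ)) * PowerSeries.coeff j Q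
      = (if j = 0 then 1 else 0) := this.symm
  linear_combination h2

lemma coeff_eq_aQ (N : ℕ) (Q : PowerSeries ℚ) (h : Dop N 0 Q = 1)
    (h0 : PowerSeries.constantCoeff Q = 0) (j : ℕ) :
    PowerSeries.coeff j Q = aQ N j := by
  induction j with
  | zero => rw [PowerSeries.coeff_zero_eq_constantCoeff, h0]; rfl
  | succ k ih =>
    have h1 := key_rec N Q h k
    have h2 := aQ_rec N k
    rw [ih] at h1
    have h3 : ((k:ℚ)+1)^2 ≠ 0 := by positivity
    apply mul_left_cancel₀ h3
    rw [h1, h2]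

lemma aQ_vanish (N : ℕ) (hN : 0 < N) (j : ℕ) (hj : N < j) : aQ N j = 0 := by
  induction j with
  | zero => omega
  | succ k ih =>
    have h2 := aQ_rec N k
    have h3 : ((k:ℚ)+1)^2 ≠ 0 := by positivity
    apply mul_left_cancel₀ h3
    rw [h2, mul_zero]
    rcases Nat.lt_or_ge N k with hk | hk
    · rw [ih hk, mul_zero, zero_add, if_neg (by omega)]
    · have hNk : N = k := by omega
      rw [hNk, sub_self, mul_zero, zero_mul, zero_add, if_neg (by omega)]

lemma aQ_formula (N : ℕ) (hN : 0 < N) (j : ℕ) (h1 : 1 ≤ j) (hj : j ≤ N) :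
    aQ N j = ((N-1).factorial : ℚ) / (((N-j).factorial : ℚ) * j * (j.factorial : ℚ)) := by
  induction j, h1 using Nat.le_induction with
  | base =>
    show aQ N 1 = _
    have hf : ((N-1).factorial : ℚ) ≠ 0 := Nat.cast_ne_zero.mpr (Nat.factorial_ne_zero _)
    rw [aQ]
    simp only [Nat.factorial_one, Nat.cast_one, mul_one, Nat.factorial]
    rw [div_self hf]
  | succ k hk ih =>
    have hkN : k + 1 ≤ N := hj
    have ih' := ih (by omega)
    have h2 := aQ_rec N k
    rw [if_neg (by omega), ih'] at h2
    have h3 : ((k:ℚ)+1)^2 ≠ 0 := by positivity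
    apply mul_left_cancel₀ h3
    rw [h2]
    -- factorial identities
    have hfact : (N - k).factorial = (N - k) * (N - (k+1)).factorial := by
      have : N - k = (N - (k+1)) + 1 := by omega
      rw [this, Nat.factorial_succ]
    have hcast : ((N:ℚ) - (k:ℚ)) = ((N - k : ℕ) : ℚ) := by
      rw [Nat.cast_sub (by omega)]
    have hfk : ((k+1).factorial : ℚ) = ((k:ℚ)+1) * (k.factorial : ℚ) := by
      rw [Nat.factorial_succ]; push_cast; ring
    have hne1 : ((N - (k+1)).factorial : ℚ) ≠ 0 := Nat.cast_ne_zero.mpr (Nat.factorial_ne_zero _)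
    have hne2 : ((k.factorial : ℚ)) ≠ 0 := Nat.cast_ne_zero.mpr (Nat.factorial_ne_zero _)
    have hne3 : ((k:ℚ)) ≠ 0 := Nat.cast_ne_zero.mpr (by omega)
    have hne4 : ((N - k : ℕ) : ℚ) ≠ 0 := Nat.cast_ne_zero.mpr (by omega)
    have hne5 : ((k:ℚ)+1) ≠ 0 := by positivity
    rw [hcast, hfk]
    push_cast [hfact]
    field_simp
    ring

/-- The unique formal power series `Q_0` with `D_0 Q_0 = 1` and `Q_0(0) = 0` is a polynomial
of degree exactly `N`, with `y^N` coefficient `1/N²`. -/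
theorem Q0_coeff (N : ℕ) (hN : 0 < N) :
    (∃! Q : PowerSeries ℚ, Dop N 0 Q = 1 ∧ PowerSeries.constantCoeff Q = 0) ∧
      ∀ Q : PowerSeries ℚ, Dop N 0 Q = 1 → PowerSeries.constantCoeff Q = 0 →
        (∀ j : ℕ, N < j → PowerSeries.coeff j Q = 0) ∧
          PowerSeries.coeff N Q = 1 / (N : ℚ)^2 := by
  constructor
  · refine ⟨PowerSeries.mk (aQ N), ⟨?_, ?_⟩, ?_⟩
    · ext j
      rw [coeff_Dop, PowerSeries.coeff_one, PowerSeries.coeff_mk, PowerSeries.coeff_mk]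
      linear_combination aQ_rec N j
    · show aQ N 0 = 0
      rfl
    · rintro Q ⟨h1, h2⟩
      ext j
      rw [coeff_eq_aQ N Q h1 h2, PowerSeries.coeff_mk]
  · intro Q h1 h2
    constructor
    · intro j hj
      rw [coeff_eq_aQ N Q h1 h2]
      exact aQ_vanish N hN j hj
    · rw [coeff_eq_aQ N Q h1 h2, aQ_formula N hN N hN le_rfl]
      rw [Nat.sub_self, Nat.factorial_zero]
      have hfac : (N.factorial : ℚ) = (N : ℚ) * ((N-1).factorial : ℚ) := by
        rw_mod_cast [Nat.mul_factorial_pred hN.ne']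
      have hne : ((N-1).factorial : ℚ) ≠ 0 := Nat.cast_ne_zero.mpr (Nat.factorial_ne_zero _)
      have hNne : (N:ℚ) ≠ 0 := Nat.cast_ne_zero.mpr (by omega)
      rw [hfac]
      field_simp
      ring
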